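/- If λ = 0 and m > 2, then in the localization S[x_1^{-1}] of S at the powers of x_1, the set of elements of the form f/x_1^k with f ∈ S^G and k ≥ 0 equals the F-subalgebra of S[x_1^{-1}] generated by x_1, …, x_m, N_1, N_2, t_3, …, t_m together with x_1^{-1}; i.e. S^G[x_1^{-1}] = F[x_1,…,x_m,N_1,N_2,t_3,…,t_m][x_1^{-1}]. -/

import Mathlib

/-!
STATEMENT 11: For the representation V_{m,0} (λ = 0) of the Klein four group G = ⟨σ1,σ2⟩
over a field F of characteristic 2 (so σ2(y_1) = y_1 and σ2(y_j) = y_j + x_{j−1} for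
j > 1), if m > 2 then, in the localization S[x_1^{-1}], the set of elements of the form
f/x_1^k with f ∈ S^G and k ≥ 0 equals the F-subalgebra generated by the images of
x_1,…,x_m, N_1, N_2, t_3,…,t_m together with x_1^{-1} (the unique element z with
z·x_1 = 1).  Here N_1 = n_1 and N_2 = n_2 + u_{12} + u_{13} are the λ = 0 cases of the
general N_i.
-/

open MvPolynomial

noncomputable section

/-- The variable x_i (1-based index); by convention 0 for i outside {1,…,m}. -/
def xv (F : Type) [Field F] (m : ℕ) (i : ℕ) : MvPolynomial (Fin m ⊕ Fin m) F :=
  if h : 1 ≤ i ∧ i ≤ m then X (Sum.inl ⟨i - 1, by omega⟩) else 0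

/-- The variable y_i (1-based index); by convention 0 for i outside {1,…,m}. -/
def yv (F : Type) [Field F] (m : ℕ) (i : ℕ) : MvPolynomial (Fin m ⊕ Fin m) F :=
  if h : 1 ≤ i ∧ i ≤ m then X (Sum.inr ⟨i - 1, by omega⟩) else 0

/-- n_i = y_i² + x_i y_i. -/
def nv (F : Type) [Field F] (m : ℕ) (i : ℕ) : MvPolynomial (Fin m ⊕ Fin m) F :=
  yv F m i ^ 2 + xv F m i * yv F m i

/-- u_{ab} = x_a y_b + x_b y_a. -/
def uv (F : Type) [Field F] (m : ℕ) (a b : ℕ) : MvPolynomial (Fin m ⊕ Fin m) F :=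
  xv F m a * yv F m b + xv F m b * yv F m a

/-- N_i = n_i + (λ²+λ)·Σ_{j=1}^{i} u_{i−j+1,i+j} + Σ_{j=1}^{i−1} (u_{i−j,i+j} + u_{i−j,i+j−1}). -/
def Nv (F : Type) [Field F] (m : ℕ) (lam : F) (i : ℕ) : MvPolynomial (Fin m ⊕ Fin m) F :=
  nv F m i + C (lam ^ 2 + lam) * ∑ j ∈ Finset.Icc 1 i, uv F m (i - j + 1) (i + j)
    + ∑ j ∈ Finset.Icc 1 (i - 1), (uv F m (i - j) (i + j) + uv F m (i - j) (i + j - 1))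

/-- The norm N_G(y_j), the product of the distinct elements of the G-orbit
{y_j, y_j+x_j, y_j+λx_j+x_{j−1}, y_j+(λ+1)x_j+x_{j−1}} of y_j (these four elements are
pairwise distinct in every case in which the norm is used). -/
def normYv (F : Type) [Field F] (m : ℕ) (lam : F) (j : ℕ) : MvPolynomial (Fin m ⊕ Fin m) F :=
  yv F m j * (yv F m j + xv F m j) * (yv F m j + C lam * xv F m j + xv F m (j - 1)) *
    (yv F m j + C (lam + 1) * xv F m j + xv F m (j - 1))

/-- t_j = u_{12}·x_{j−1} + u_{1j}·x_1. -/
def tv (F : Type) [Field F] (m : ℕ) (j : ℕ) : MvPolynomial (Fin m ⊕ Fin m) F :=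
  uv F m 1 2 * xv F m (j - 1) + uv F m 1 j * xv F m 1

/-- The invariant subalgebra S^G for G = ⟨σ1, σ2⟩. -/
def invSub {F : Type} [Field F] {τ : Type} (σ1 σ2 : MvPolynomial τ F ≃ₐ[F] MvPolynomial τ F) :
    Subalgebra F (MvPolynomial τ F) :=
  AlgHom.equalizer (σ1 : MvPolynomial τ F →ₐ[F] MvPolynomial τ F) (AlgHom.id F _) ⊓
    AlgHom.equalizer (σ2 : MvPolynomial τ F →ₐ[F] MvPolynomial τ F) (AlgHom.id F _)

/-- The transfer Tr(f) = Σ_{g ∈ G} g·f for the Klein four group G = {1, σ1, σ2, σ1σ2}. -/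
def trf {F : Type} [Field F] {τ : Type} (σ1 σ2 : MvPolynomial τ F ≃ₐ[F] MvPolynomial τ F)
    (f : MvPolynomial τ F) : MvPolynomial τ F :=
  f + σ1 f + σ2 f + σ1 (σ2 f)

/-- Products of two homogeneous G-invariants of positive degree; the span of this set over
S^G is (S^G_+)², the square of the ideal of S^G generated by the homogeneous invariants of
positive degree.  An invariant is *indecomposable* iff it does not lie in this span. -/
def decompSet {F : Type} [Field F] {τ : Type}
    (σ1 σ2 : MvPolynomial τ F ≃ₐ[F] MvPolynomial τ F) : Set (MvPolynomial τ F) :=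
  {f | ∃ a b : MvPolynomial τ F,
    (σ1 a = a ∧ σ2 a = a ∧ ∃ d, 0 < d ∧ a.IsHomogeneous d) ∧
    (σ1 b = b ∧ σ2 b = b ∧ ∃ d, 0 < d ∧ b.IsHomogeneous d) ∧ f = a * b}


set_option maxHeartbeats 2000000 in
theorem stmt_11 (F : Type) [Field F] [CharP F 2] (m : ℕ) (hm : 2 < m)
    (σ1 σ2 : MvPolynomial (Fin m ⊕ Fin m) F ≃ₐ[F] MvPolynomial (Fin m ⊕ Fin m) F)
    (hσ1x : ∀ i, σ1 (xv F m i) = xv F m i)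
    (hσ2x : ∀ i, σ2 (xv F m i) = xv F m i)
    (hσ1y : ∀ i, 1 ≤ i → i ≤ m → σ1 (yv F m i) = yv F m i + xv F m i)
    (hσ2y1 : σ2 (yv F m 1) = yv F m 1)
    (hσ2y : ∀ i, 2 ≤ i → i ≤ m → σ2 (yv F m i) = yv F m i + xv F m (i - 1)) :
    {z : Localization.Away (xv F m 1) | ∃ (f : MvPolynomial (Fin m ⊕ Fin m) F) (k : ℕ),
        σ1 f = f ∧ σ2 f = f ∧
        algebraMap (MvPolynomial (Fin m ⊕ Fin m) F) (Localization.Away (xv F m 1))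
            (xv F m 1) ^ k * z
          = algebraMap (MvPolynomial (Fin m ⊕ Fin m) F) (Localization.Away (xv F m 1)) f}
      = ↑(Algebra.adjoin F
          ((algebraMap (MvPolynomial (Fin m ⊕ Fin m) F) (Localization.Away (xv F m 1)) ''
              ((xv F m '' Set.Icc 1 m) ∪ {Nv F m 0 1, Nv F m 0 2} ∪
                (tv F m '' Set.Icc 3 m))) ∪
            {z : Localization.Away (xv F m 1) |
              z * algebraMap (MvPolynomial (Fin m ⊕ Fin m) F) (Localization.Away (xv F m 1))
                (xv F m 1) = 1})) := by
  have hm1 : (1 : ℕ) ≤ m := by omega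
  have hm2 : (2 : ℕ) ≤ m := by omega
  have hm3 : (3 : ℕ) ≤ m := by omega
  have h2S : (2 : MvPolynomial (Fin m ⊕ Fin m) F) = 0 := CharTwo.two_eq_zero
  -- the two invariants in the λ = 0 case
  have hNv01 : Nv F m 0 1 = nv F m 1 := by
    simp [Nv]
  have hNv02 : Nv F m 0 2 = nv F m 2 + (uv F m 1 3 + uv F m 1 2) := by
    simp [Nv]
  -- invariance of N1
  have hσ1N1 : σ1 (Nv F m 0 1) = Nv F m 0 1 := by
    rw [hNv01]
    simp only [nv, map_add, map_mul, map_pow, hσ1x, hσ1y 1 le_rfl hm1]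
    linear_combination (xv F m 1 * yv F m 1 + xv F m 1 ^ 2) * h2S
  have hσ2N1 : σ2 (Nv F m 0 1) = Nv F m 0 1 := by
    rw [hNv01]
    simp only [nv, map_add, map_mul, map_pow, hσ2x, hσ2y1]
  -- invariance of N2
  have hσ1N2 : σ1 (Nv F m 0 2) = Nv F m 0 2 := by
    rw [hNv02]
    simp only [nv, uv, map_add, map_mul, map_pow, hσ1x, hσ1y 1 le_rfl hm1,
      hσ1y 2 (by omega) hm2, hσ1y 3 (by omega) hm3]
    linear_combination (xv F m 2 * yv F m 2 + xv F m 2 ^ 2 + xv F m 1 * xv F m 3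
      + xv F m 1 * xv F m 2) * h2S
  have hσ2N2 : σ2 (Nv F m 0 2) = Nv F m 0 2 := by
    rw [hNv02]
    have e2 : σ2 (yv F m 2) = yv F m 2 + xv F m 1 := hσ2y 2 le_rfl hm2
    have e3 : σ2 (yv F m 3) = yv F m 3 + xv F m 2 := hσ2y 3 (by omega) hm3
    simp only [nv, uv, map_add, map_mul, map_pow, hσ2x, hσ2y1, e2, e3]
    linear_combination (xv F m 1 * yv F m 2 + xv F m 1 * xv F m 2 + xv F m 1 ^ 2) * h2S
  -- invariance of u12 under σ1, behaviour under σ2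
  have hσ1u12 : σ1 (uv F m 1 2) = uv F m 1 2 := by
    simp only [uv, map_add, map_mul, hσ1x, hσ1y 1 le_rfl hm1, hσ1y 2 (by omega) hm2]
    linear_combination (xv F m 1 * xv F m 2) * h2S
  have hσ2u12 : σ2 (uv F m 1 2) = uv F m 1 2 + xv F m 1 ^ 2 := by
    have e2 : σ2 (yv F m 2) = yv F m 2 + xv F m 1 := hσ2y 2 le_rfl hm2
    simp only [uv, map_add, map_mul, hσ2x, hσ2y1, e2]
    ring
  -- invariance of the t_j
  have hσ1t : ∀ j, 3 ≤ j → j ≤ m → σ1 (tv F m j) = tv F m j := by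
    intro j h3 hj
    simp only [tv, uv, map_add, map_mul, hσ1x, hσ1y 1 le_rfl hm1,
      hσ1y 2 (by omega) hm2, hσ1y j (by omega) hj]
    linear_combination (xv F m 1 * xv F m 2 * xv F m (j - 1)
      + xv F m 1 ^ 2 * xv F m j) * h2S
  have hσ2t : ∀ j, 3 ≤ j → j ≤ m → σ2 (tv F m j) = tv F m j := by
    intro j h3 hj
    have e2 : σ2 (yv F m 2) = yv F m 2 + xv F m 1 := hσ2y 2 le_rfl hm2
    have ej : σ2 (yv F m j) = yv F m j + xv F m (j - 1) := hσ2y j (by omega) hj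
    simp only [tv, uv, map_add, map_mul, hσ2x, hσ2y1, e2, ej]
    linear_combination (xv F m 1 ^ 2 * xv F m (j - 1)) * h2S
  -- structural identities in S
  have hI1 : yv F m 1 ^ 2 = Nv F m 0 1 + xv F m 1 * yv F m 1 := by
    rw [hNv01]
    simp only [nv]
    linear_combination (-(xv F m 1 * yv F m 1)) * h2S
  have hI3' : xv F m 1 * yv F m 2 = uv F m 1 2 + xv F m 2 * yv F m 1 := by
    simp only [uv]
    linear_combination (-(xv F m 2 * yv F m 1)) * h2S
  have hI3 : ∀ j, 3 ≤ j → j ≤ m →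
      xv F m 1 ^ 2 * yv F m j
        = tv F m j + xv F m (j - 1) * uv F m 1 2 + xv F m 1 * xv F m j * yv F m 1 := by
    intro j h3 hj
    simp only [tv, uv]
    linear_combination (-(xv F m 2 * xv F m (j - 1) * yv F m 1)
      - xv F m 1 * xv F m (j - 1) * yv F m 2 - xv F m 1 * xv F m j * yv F m 1) * h2S
  have ht3 : tv F m 3 = uv F m 1 2 * xv F m 2 + uv F m 1 3 * xv F m 1 := by
    norm_num [tv]
  have hI2 : uv F m 1 2 ^ 2
      = (xv F m 1 ^ 2 * Nv F m 0 2 + xv F m 2 ^ 2 * Nv F m 0 1 + xv F m 1 * tv F m 3)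
        + xv F m 1 ^ 2 * uv F m 1 2 := by
    rw [hNv01, hNv02, ht3]
    simp only [nv, uv]
    linear_combination (xv F m 1 * xv F m 2 * yv F m 1 * yv F m 2
      - xv F m 1 * xv F m 2 ^ 2 * yv F m 1 - xv F m 1 ^ 2 * xv F m 3 * yv F m 1
      - xv F m 1 ^ 2 * xv F m 2 * yv F m 2 - xv F m 1 ^ 2 * xv F m 2 * yv F m 1
      - xv F m 1 ^ 3 * yv F m 3 - xv F m 1 ^ 3 * yv F m 2) * h2S
  -- conversion between xv/yv and X
  have hxvX : ∀ i : Fin m, xv F m (i.val + 1) = X (Sum.inl i) := by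
    intro i
    rw [xv, dif_pos ⟨by omega, by omega⟩]
    congr 1
  have hyvX : ∀ i : Fin m, yv F m (i.val + 1) = X (Sum.inr i) := by
    intro i
    rw [yv, dif_pos ⟨by omega, by omega⟩]
    congr 1
  -- now move to the localization
  set φ := algebraMap (MvPolynomial (Fin m ⊕ Fin m) F) (Localization.Away (xv F m 1))
    with hφdef
  set X1 := φ (xv F m 1) with hX1def
  set Y := φ (yv F m 1) with hYdef
  set U := φ (uv F m 1 2) with hUdef
  set inv := IsLocalization.Away.invSelf (S := Localization.Away (xv F m 1)) (xv F m 1)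
    with hinvdef
  have hinv : X1 * inv = 1 := IsLocalization.Away.mul_invSelf (xv F m 1)
  have huniq : ∀ w, w * X1 = 1 → w = inv := by
    intro w hw
    calc w = w * (X1 * inv) := by rw [hinv, mul_one]
    _ = w * X1 * inv := by ring
    _ = inv := by rw [hw, one_mul]
  have halg : ∀ r : F, algebraMap F (Localization.Away (xv F m 1)) r = φ (C r) := by
    intro r
    rw [IsScalarTower.algebraMap_apply F (MvPolynomial (Fin m ⊕ Fin m) F)
      (Localization.Away (xv F m 1)), MvPolynomial.algebraMap_eq]
  set R := Algebra.adjoin F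
      ((φ '' ((xv F m '' Set.Icc 1 m) ∪ {Nv F m 0 1, Nv F m 0 2} ∪
          (tv F m '' Set.Icc 3 m))) ∪
        {z : Localization.Away (xv F m 1) | z * X1 = 1}) with hRdef
  -- membership of the generators
  have hxR : ∀ i, 1 ≤ i → i ≤ m → φ (xv F m i) ∈ R := by
    intro i h1 h2
    exact Algebra.subset_adjoin (Or.inl ⟨xv F m i, Or.inl (Or.inl ⟨i, ⟨h1, h2⟩, rfl⟩), rfl⟩)
  have hx1R : X1 ∈ R := hxR 1 le_rfl hm1
  have hN1R : φ (Nv F m 0 1) ∈ R :=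
    Algebra.subset_adjoin (Or.inl ⟨Nv F m 0 1, Or.inl (Or.inr (Or.inl rfl)), rfl⟩)
  have hN2R : φ (Nv F m 0 2) ∈ R :=
    Algebra.subset_adjoin (Or.inl ⟨Nv F m 0 2, Or.inl (Or.inr (Or.inr rfl)), rfl⟩)
  have htR : ∀ j, 3 ≤ j → j ≤ m → φ (tv F m j) ∈ R := by
    intro j h3 hj
    exact Algebra.subset_adjoin (Or.inl ⟨tv F m j, Or.inr ⟨j, ⟨h3, hj⟩, rfl⟩, rfl⟩)
  have hinvR : inv ∈ R := by
    refine Algebra.subset_adjoin (Or.inr ?_)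
    show inv * X1 = 1
    rw [mul_comm]; exact hinv
  -- the lifted automorphisms
  have hu1 : IsUnit ((φ.comp σ1.toAlgHom.toRingHom) (xv F m 1)) := by
    have h : (φ.comp σ1.toAlgHom.toRingHom) (xv F m 1) = X1 := by
      show φ (σ1 (xv F m 1)) = X1
      rw [hσ1x]
    rw [h]
    exact IsUnit.of_mul_eq_one _ hinv
  set Sg1 := IsLocalization.Away.lift (S := Localization.Away (xv F m 1))
      (g := φ.comp σ1.toAlgHom.toRingHom) (xv F m 1) hu1 with hSg1def
  have hSg1 : ∀ p, Sg1 (φ p) = φ (σ1 p) := fun p =>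
    IsLocalization.Away.lift_eq (xv F m 1) hu1 p
  have hu2 : IsUnit ((φ.comp σ2.toAlgHom.toRingHom) (xv F m 1)) := by
    have h : (φ.comp σ2.toAlgHom.toRingHom) (xv F m 1) = X1 := by
      show φ (σ2 (xv F m 1)) = X1
      rw [hσ2x]
    rw [h]
    exact IsUnit.of_mul_eq_one _ hinv
  set Sg2 := IsLocalization.Away.lift (S := Localization.Away (xv F m 1))
      (g := φ.comp σ2.toAlgHom.toRingHom) (xv F m 1) hu2 with hSg2def
  have hSg2 : ∀ p, Sg2 (φ p) = φ (σ2 p) := fun p =>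
    IsLocalization.Away.lift_eq (xv F m 1) hu2 p
  have hSg1X1 : Sg1 X1 = X1 := by rw [hX1def, hSg1, hσ1x]
  have hSg2X1 : Sg2 X1 = X1 := by rw [hX1def, hSg2, hσ2x]
  have hSg1Y : Sg1 Y = Y + X1 := by
    rw [hYdef, hSg1, hσ1y 1 le_rfl hm1, RingHom.map_add φ]
  have hSg2Y : Sg2 Y = Y := by rw [hYdef, hSg2, hσ2y1]
  have hSg1U : Sg1 U = U := by rw [hUdef, hSg1, hσ1u12]
  have hSg2U : Sg2 U = U + X1 ^ 2 := by
    rw [hUdef, hSg2, hσ2u12, RingHom.map_add φ, RingHom.map_pow φ]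
  have hSg1inv : Sg1 inv = inv := by
    have h1 : Sg1 inv * X1 = 1 := by
      have := congrArg Sg1 hinv
      rw [map_mul, map_one, hSg1X1] at this
      rw [mul_comm]
      exact this
    exact huniq _ h1
  -- Sg1 and Sg2 fix the subalgebra R pointwise
  have hfixgen : ∀ (Sg : Localization.Away (xv F m 1) →+* Localization.Away (xv F m 1))
      (σ : MvPolynomial (Fin m ⊕ Fin m) F ≃ₐ[F] MvPolynomial (Fin m ⊕ Fin m) F),
      (∀ p, Sg (φ p) = φ (σ p)) → (∀ i, σ (xv F m i) = xv F m i) →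
      σ (Nv F m 0 1) = Nv F m 0 1 → σ (Nv F m 0 2) = Nv F m 0 2 →
      (∀ j, 3 ≤ j → j ≤ m → σ (tv F m j) = tv F m j) →
      ∀ z ∈ R, Sg z = z := by
    intro Sg σ hSg hx hN1 hN2 ht z hz
    rw [hRdef] at hz
    induction hz using Algebra.adjoin_induction with
    | mem w hw =>
      rcases hw with ⟨p, hp, rfl⟩ | hw
      · rcases hp with (⟨i, hi, rfl⟩ | hp) | ⟨j, hj, rfl⟩
        · rw [hSg, hx]
        · rcases hp with rfl | rfl
          · rw [hSg, hN1]
          · rw [hSg, hN2]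
        · rw [hSg, ht j hj.1 hj.2]
      · have h1 : Sg w * X1 = 1 := by
          have h2 := congrArg Sg hw
          rw [RingHom.map_mul, RingHom.map_one] at h2
          have hX : Sg X1 = X1 := by rw [hX1def, hSg, hx]
          rw [hX] at h2
          exact h2
        rw [huniq _ h1, huniq _ hw]
    | algebraMap r =>
      rw [halg, hSg]
      congr 1
      rw [← MvPolynomial.algebraMap_eq]
      exact σ.commutes r
    | add u v _ _ hu hv => rw [RingHom.map_add, hu, hv]
    | mul u v _ _ hu hv => rw [RingHom.map_mul, hu, hv]
  have hfix1R : ∀ z ∈ R, Sg1 z = z := hfixgen Sg1 σ1 hSg1 hσ1x hσ1N1 hσ1N2 hσ1t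
  have hfix2R : ∀ z ∈ R, Sg2 z = z := hfixgen Sg2 σ2 hSg2 hσ2x hσ2N1 hσ2N2 hσ2t
  -- quadratic relations for Y and U over R
  have hY2 : Y ^ 2 = φ (Nv F m 0 1) + X1 * Y := by
    have h := congrArg φ hI1
    simp only [map_add, map_mul, map_pow] at h
    rw [hYdef, hX1def]
    exact h
  set MM := X1 ^ 2 * φ (Nv F m 0 2) + φ (xv F m 2) ^ 2 * φ (Nv F m 0 1) + X1 * φ (tv F m 3)
    with hMMdef
  have hMMR : MM ∈ R := by
    refine add_mem (add_mem (mul_mem (pow_mem hx1R 2) hN2R)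
      (mul_mem (pow_mem (hxR 2 (by omega) hm2) 2) hN1R)) (mul_mem hx1R (htR 3 le_rfl hm3))
  have hU2 : U ^ 2 = MM + X1 ^ 2 * U := by
    have h := congrArg φ hI2
    simp only [map_add, map_mul, map_pow] at h
    rw [hUdef, hX1def, hMMdef, hX1def]
    exact h
  -- multiplicative closure of the module decomposition
  have hTmul : ∀ z w : Localization.Away (xv F m 1),
      (∃ a b c d, a ∈ R ∧ b ∈ R ∧ c ∈ R ∧ d ∈ R ∧ z = a + b * Y + c * U + d * (Y * U)) →
      (∃ a b c d, a ∈ R ∧ b ∈ R ∧ c ∈ R ∧ d ∈ R ∧ w = a + b * Y + c * U + d * (Y * U)) →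
      (∃ a b c d, a ∈ R ∧ b ∈ R ∧ c ∈ R ∧ d ∈ R ∧
        z * w = a + b * Y + c * U + d * (Y * U)) := by
    rintro z w ⟨a, b, c, d, ha, hb, hc, hd, rfl⟩ ⟨e, f, g, h, he, hf, hg, hh, rfl⟩
    refine ⟨a * e + b * f * φ (Nv F m 0 1) + c * g * MM + d * h * (φ (Nv F m 0 1) * MM),
      a * f + b * e + b * f * X1 + (c * h + d * g) * MM + d * h * (X1 * MM),
      a * g + c * e + c * g * X1 ^ 2 + (b * h + d * f) * φ (Nv F m 0 1)
        + d * h * (φ (Nv F m 0 1) * X1 ^ 2),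
      a * h + b * g + c * f + d * e + (b * h + d * f) * X1 + (c * h + d * g) * X1 ^ 2
        + d * h * (X1 * X1 ^ 2),
      ?_, ?_, ?_, ?_, ?_⟩
    · exact add_mem (add_mem (add_mem (mul_mem ha he) (mul_mem (mul_mem hb hf) hN1R))
        (mul_mem (mul_mem hc hg) hMMR)) (mul_mem (mul_mem hd hh) (mul_mem hN1R hMMR))
    · exact add_mem (add_mem (add_mem (add_mem (mul_mem ha hf) (mul_mem hb he))
        (mul_mem (mul_mem hb hf) hx1R)) (mul_mem (add_mem (mul_mem hc hh) (mul_mem hd hg))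
        hMMR)) (mul_mem (mul_mem hd hh) (mul_mem hx1R hMMR))
    · exact add_mem (add_mem (add_mem (add_mem (mul_mem ha hg) (mul_mem hc he))
        (mul_mem (mul_mem hc hg) (pow_mem hx1R 2)))
        (mul_mem (add_mem (mul_mem hb hh) (mul_mem hd hf)) hN1R))
        (mul_mem (mul_mem hd hh) (mul_mem hN1R (pow_mem hx1R 2)))
    · exact add_mem (add_mem (add_mem (add_mem (add_mem (add_mem (mul_mem ha hh)
        (mul_mem hb hg)) (mul_mem hc hf)) (mul_mem hd he))
        (mul_mem (add_mem (mul_mem hb hh) (mul_mem hd hf)) hx1R))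
        (mul_mem (add_mem (mul_mem hc hh) (mul_mem hd hg)) (pow_mem hx1R 2)))
        (mul_mem (mul_mem hd hh) (mul_mem hx1R (pow_mem hx1R 2)))
    · linear_combination (b * f + (b * h + d * f) * U + d * h * U ^ 2) * hY2
        + (c * g + (c * h + d * g) * Y + d * h * (φ (Nv F m 0 1) + X1 * Y)) * hU2
  -- every image of a variable admits a decomposition
  have hXdec : ∀ v : Fin m ⊕ Fin m,
      ∃ a b c d, a ∈ R ∧ b ∈ R ∧ c ∈ R ∧ d ∈ R ∧
        φ (X v) = a + b * Y + c * U + d * (Y * U) := by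
    rintro (i | i)
    · refine ⟨φ (X (Sum.inl i)), 0, 0, 0, ?_, zero_mem R, zero_mem R, zero_mem R, by ring⟩
      rw [← hxvX i]
      exact hxR (i.val + 1) (by omega) (by omega)
    · rw [← hyvX i]
      rcases Nat.lt_or_ge i.val 1 with h0 | h1
      · have hiv : i.val + 1 = 1 := by omega
        rw [hiv]
        exact ⟨0, 1, 0, 0, zero_mem R, one_mem R, zero_mem R, zero_mem R,
          by rw [hYdef]; ring⟩
      rcases Nat.lt_or_ge i.val 2 with h1' | h2
      · have hiv : i.val + 1 = 2 := by omega
        rw [hiv]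
        have heq : X1 * φ (yv F m 2) = U + φ (xv F m 2) * Y := by
          have h := congrArg φ hI3'
          simp only [map_add, map_mul] at h
          rw [hX1def, hUdef, hYdef]
          exact h
        exact ⟨0, inv * φ (xv F m 2), inv, 0, zero_mem R,
          mul_mem hinvR (hxR 2 (by omega) hm2), hinvR, zero_mem R,
          by linear_combination inv * heq - φ (yv F m 2) * hinv⟩
      · have h3 : 3 ≤ i.val + 1 := by omega
        have hjm : i.val + 1 ≤ m := by omega
        have heq : X1 ^ 2 * φ (yv F m (i.val + 1))
            = φ (tv F m (i.val + 1)) + φ (xv F m (i.val + 1 - 1)) * U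
              + X1 * φ (xv F m (i.val + 1)) * Y := by
          have h := congrArg φ (hI3 (i.val + 1) h3 hjm)
          simp only [map_add, map_mul, map_pow] at h
          rw [hX1def, hUdef, hYdef]
          exact h
        exact ⟨inv ^ 2 * φ (tv F m (i.val + 1)), inv ^ 2 * (X1 * φ (xv F m (i.val + 1))),
          inv ^ 2 * φ (xv F m (i.val + 1 - 1)), 0,
          mul_mem (pow_mem hinvR 2) (htR _ h3 hjm),
          mul_mem (pow_mem hinvR 2) (mul_mem hx1R (hxR _ (by omega) hjm)),
          mul_mem (pow_mem hinvR 2) (hxR (i.val + 1 - 1) (by omega) (by omega)), zero_mem R,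
          by linear_combination inv ^ 2 * heq
            - φ (yv F m (i.val + 1)) * (1 + X1 * inv) * hinv⟩
  -- every element of the image of S admits a decomposition
  have hTall : ∀ p : MvPolynomial (Fin m ⊕ Fin m) F,
      ∃ a b c d, a ∈ R ∧ b ∈ R ∧ c ∈ R ∧ d ∈ R ∧
        φ p = a + b * Y + c * U + d * (Y * U) := by
    intro p
    induction p using MvPolynomial.induction_on with
    | C r =>
      refine ⟨φ (C r), 0, 0, 0, ?_, zero_mem R, zero_mem R, zero_mem R, by ring⟩
      rw [← halg r]
      exact Subalgebra.algebraMap_mem R r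
    | add p q hp hq =>
      obtain ⟨a, b, c, d, ha, hb, hc, hd, hpe⟩ := hp
      obtain ⟨e, f, g, h, he, hf, hg, hh, hqe⟩ := hq
      exact ⟨a + e, b + f, c + g, d + h, add_mem ha he, add_mem hb hf, add_mem hc hg,
        add_mem hd hh, by rw [RingHom.map_add, hpe, hqe]; ring⟩
    | mul_X p n hp =>
      have h := hTmul (φ p) (φ (X n)) hp (hXdec n)
      rwa [← RingHom.map_mul] at h
  -- final set equality
  ext z
  simp only [Set.mem_setOf_eq, SetLike.mem_coe]
  constructor
  · rintro ⟨f, k, hf1, hf2, hk⟩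
    have hzz : z = φ f * inv ^ k := by
      have h1 : X1 ^ k * inv ^ k = 1 := by rw [← mul_pow, hinv, one_pow]
      calc z = (X1 ^ k * inv ^ k) * z := by rw [h1, one_mul]
      _ = inv ^ k * (X1 ^ k * z) := by ring
      _ = inv ^ k * φ f := by rw [hk]
      _ = φ f * inv ^ k := by ring
    obtain ⟨a, b, c, d, ha, hb, hc, hd, hdec⟩ := hTall f
    have hfx1 : Sg1 (φ f) = φ f := by rw [hSg1, hf1]
    have hfx2 : Sg2 (φ f) = φ f := by rw [hSg2, hf2]
    have e1 : φ f = a + b * (Y + X1) + c * U + d * ((Y + X1) * U) := by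
      have h := congrArg Sg1 hdec
      simp only [RingHom.map_add, RingHom.map_mul] at h
      rw [hfx1, hSg1Y, hSg1U, hfix1R a ha, hfix1R b hb, hfix1R c hc, hfix1R d hd] at h
      exact h
    have hbd : b + d * U = 0 := by
      have h0 : (b + d * U) * X1 = 0 := by linear_combination hdec - e1
      calc b + d * U = (b + d * U) * (X1 * inv) := by rw [hinv, mul_one]
      _ = ((b + d * U) * X1) * inv := by ring
      _ = 0 := by rw [h0, zero_mul]
    have e2 : φ f = a + c * U := by linear_combination hdec + Y * hbd
    have e3 : φ f = a + c * (U + X1 ^ 2) := by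
      have h := congrArg Sg2 e2
      simp only [RingHom.map_add, RingHom.map_mul] at h
      rw [hfx2, hSg2U, hfix2R a ha, hfix2R c hc] at h
      exact h
    have hc0 : c = 0 := by
      have h0 : c * X1 ^ 2 = 0 := by linear_combination e2 - e3
      calc c = c * ((X1 * inv) * (X1 * inv)) := by rw [hinv, mul_one, mul_one]
      _ = (c * X1 ^ 2) * inv ^ 2 := by ring
      _ = 0 := by rw [h0, zero_mul]
    have hfa : φ f = a := by rw [e2, hc0]; ring
    have : z ∈ R := by
      rw [hzz, hfa]
      exact mul_mem ha (pow_mem hinvR k)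
    exact this
  · intro hz
    rw [hRdef] at hz
    induction hz using Algebra.adjoin_induction with
    | mem w hw =>
      rcases hw with ⟨p, hp, rfl⟩ | hw
      · rcases hp with (⟨i, hi, rfl⟩ | hp) | ⟨j, hj, rfl⟩
        · exact ⟨xv F m i, 0, hσ1x i, hσ2x i, by rw [pow_zero, one_mul]⟩
        · rcases hp with rfl | rfl
          · exact ⟨Nv F m 0 1, 0, hσ1N1, hσ2N1, by rw [pow_zero, one_mul]⟩
          · exact ⟨Nv F m 0 2, 0, hσ1N2, hσ2N2, by rw [pow_zero, one_mul]⟩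
        · exact ⟨tv F m j, 0, hσ1t j hj.1 hj.2, hσ2t j hj.1 hj.2, by rw [pow_zero, one_mul]⟩
      · refine ⟨1, 1, map_one σ1, map_one σ2, ?_⟩
        rw [pow_one, RingHom.map_one]
        rw [mul_comm]
        exact hw
    | algebraMap r =>
      refine ⟨C r, 0, ?_, ?_, by rw [pow_zero, one_mul, halg r]⟩
      · rw [← MvPolynomial.algebraMap_eq]; exact σ1.commutes r
      · rw [← MvPolynomial.algebraMap_eq]; exact σ2.commutes r
    | add u v _ _ hu hv =>
      obtain ⟨f, k, hf1, hf2, hkf⟩ := hu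
      obtain ⟨g, l, hg1, hg2, hlg⟩ := hv
      refine ⟨f * xv F m 1 ^ l + g * xv F m 1 ^ k, k + l, ?_, ?_, ?_⟩
      · simp only [map_add, map_mul, map_pow, hσ1x, hf1, hg1]
      · simp only [map_add, map_mul, map_pow, hσ2x, hf2, hg2]
      · simp only [map_add, map_mul, map_pow]
        linear_combination (X1 ^ l) * hkf + (X1 ^ k) * hlg
    | mul u v _ _ hu hv =>
      obtain ⟨f, k, hf1, hf2, hkf⟩ := hu
      obtain ⟨g, l, hg1, hg2, hlg⟩ := hv
      refine ⟨f * g, k + l, ?_, ?_, ?_⟩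
      · simp only [map_mul, hf1, hg1]
      · simp only [map_mul, hf2, hg2]
      · simp only [map_mul]
        linear_combination (X1 ^ l * v) * hkf + (φ f) * hlg
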